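/- For the SIR model with information-dependent contact rate S' = μ(1−S) − β(M)IS, I' = β(M)IS − (μ+ν)I, where β is positive and the information index M(t) is any nonnegative quantity with β(M) ≤ β(0), if the basic reproduction number R₀ = β(0)/(μ+ν) satisfies R₀ ≤ 1 and 0 ≤ I(0), 0 ≤ S(0), S(0)+I(0) ≤ 1, then I(t) → 0 and S(t) → 1 as t → ∞, i.e. the disease-free state is globally asymptotically stable. -/

import Mathlib

open Filter Topology Set Real

lemma nonpos_of_deriv_le_aux {f f' : ℝ → ℝ} {a b K : ℝ}
    (hd : ∀ t ∈ Icc a b, HasDerivAt f (f' t) t)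
    (h0 : f a ≤ 0)
    (hb : ∀ t ∈ Ico a b, 0 ≤ f t → f' t ≤ K * f t) :
    ∀ t ∈ Icc a b, f t ≤ 0 := by
  set g : ℝ → ℝ := fun t => f t ⊔ 0 with hg
  set g' : ℝ → ℝ := fun t => if f t ≤ 0 then 0 else f' t with hg'
  have hfc : ContinuousOn f (Icc a b) := fun t ht => ((hd t ht).continuousAt).continuousWithinAt
  have hgc : ContinuousOn g (Icc a b) := hfc.sup continuousOn_const
  have hslope : ∀ x ∈ Ico a b, ∀ r, g' x < r →
      ∃ᶠ z in 𝓝[>] x, (z - x)⁻¹ * (g z - g x) < r := by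
    intro x hx r hr
    rcases lt_trichotomy (f x) 0 with hfx | hfx | hfx
    · have hr0 : (0:ℝ) < r := by simpa [hg', hfx.le] using hr
      have hcont : ContinuousAt f x := (hd x (Ico_subset_Icc_self hx)).continuousAt
      have hev : ∀ᶠ z in 𝓝 x, f z < 0 := hcont.eventually_lt_const hfx
      have hev' : ∀ᶠ z in 𝓝[>] x, (z - x)⁻¹ * (g z - g x) < r := by
        filter_upwards [nhdsWithin_le_nhds hev] with z hz
        simp [hg, hz.le, hfx.le, hr0]
      exact hev'.frequently
    · -- f x = 0
      have hr0 : (0:ℝ) < r := by simpa [hg', hfx.le] using hr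
      have hf'le : f' x ≤ 0 := by simpa [hfx] using hb x hx hfx.ge
      have hslope := (hasDerivAt_iff_tendsto_slope.1 (hd x (Ico_subset_Icc_self hx)))
      have hslope' : Tendsto (slope f x) (𝓝[>] x) (𝓝 (f' x)) :=
        hslope.mono_left (nhdsWithin_mono _ (fun z hz => ne_of_gt hz))
      have hev : ∀ᶠ z in 𝓝[>] x, slope f x z < r :=
        hslope'.eventually_lt_const (lt_of_le_of_lt hf'le hr0)
      have hev' : ∀ᶠ z in 𝓝[>] x, (z - x)⁻¹ * (g z - g x) < r := by
        filter_upwards [hev, self_mem_nhdsWithin] with z hz (hzx : x < z)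
        have hpos : (0:ℝ) < (z - x)⁻¹ := inv_pos.2 (by linarith)
        have : (z - x)⁻¹ * (f z - f x) < r := by
          rw [slope_def_field] at hz
          rw [mul_comm]
          simpa [div_eq_mul_inv] using hz
        have hgz : (z - x)⁻¹ * (g z - g x) = max ((z - x)⁻¹ * (f z - f x)) 0 := by
          simp [hg, hfx, mul_max_of_nonneg _ _ hpos.le]
        rw [hgz]
        exact max_lt this hr0
      exact hev'.frequently
    · -- f x > 0
      have hrr : f' x < r := by simpa [hg', not_le.2 hfx] using hr
      have hcont : ContinuousAt f x := (hd x (Ico_subset_Icc_self hx)).continuousAt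
      have hevp : ∀ᶠ z in 𝓝 x, 0 < f z := hcont.eventually_const_lt hfx
      have hslope := (hasDerivAt_iff_tendsto_slope.1 (hd x (Ico_subset_Icc_self hx)))
      have hslope' : Tendsto (slope f x) (𝓝[>] x) (𝓝 (f' x)) :=
        hslope.mono_left (nhdsWithin_mono _ (fun z hz => ne_of_gt hz))
      have hev : ∀ᶠ z in 𝓝[>] x, slope f x z < r := hslope'.eventually_lt_const hrr
      have hev' : ∀ᶠ z in 𝓝[>] x, (z - x)⁻¹ * (g z - g x) < r := by
        filter_upwards [hev, nhdsWithin_le_nhds hevp] with z hz hfz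
        have : g z = f z := max_eq_left hfz.le
        have hgx : g x = f x := max_eq_left hfx.le
        rw [slope_def_field] at hz
        rw [this, hgx, mul_comm]
        simpa [div_eq_mul_inv] using hz
      exact hev'.frequently
  have hbound : ∀ x ∈ Ico a b, g' x ≤ K * g x + 0 := by
    intro x hx
    rcases le_or_gt (f x) 0 with h | h
    · simp [hg', hg, h, max_eq_right h]
    · have : g' x = f' x := by simp [hg', not_le.2 h]
      have hgx : g x = f x := max_eq_left h.le
      rw [this, hgx, add_zero]
      exact hb x hx h.le
  have key := le_gronwallBound_of_liminf_deriv_right_le (f := g) (f' := g')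
    (δ := 0) (K := K) (ε := 0) hgc hslope (by simp [hg, h0]) hbound
  intro t ht
  have := key t ht
  rw [gronwallBound_ε0] at this
  have hgt : g t ≤ 0 := by simpa using this
  exact le_trans (le_max_left _ _) hgt

theorem sir_info_dfs_gas
    (μ ν : ℝ) (hμ : 0 < μ) (hν : 0 < ν)
    (β : ℝ → ℝ) (hβpos : ∀ m, 0 ≤ m → 0 < β m)
    (hβle : ∀ m, 0 ≤ m → β m ≤ β 0)
    (S I M : ℝ → ℝ)
    (hM : ∀ t, 0 ≤ t → 0 ≤ M t)
    (hS : ∀ t, 0 ≤ t → HasDerivAt S (μ * (1 - S t) - β (M t) * I t * S t) t)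
    (hI : ∀ t, 0 ≤ t → HasDerivAt I (β (M t) * I t * S t - (μ + ν) * I t) t)
    (hI0 : 0 ≤ I 0) (hS0 : 0 ≤ S 0) (hSI0 : S 0 + I 0 ≤ 1)
    (hR0 : β 0 / (μ + ν) ≤ 1) :
    Tendsto I atTop (𝓝 0) ∧ Tendsto S atTop (𝓝 1) := by
  have hμν : (0:ℝ) < μ + ν := by linarith
  have hβ0 : 0 < β 0 := hβpos 0 le_rfl
  have hc : β 0 ≤ μ + ν := by
    rw [div_le_one hμν] at hR0; exact hR0
  set c := β 0 with hcdef
  -- continuity of S on compacts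
  have hScont : ∀ b : ℝ, 0 ≤ b → ContinuousOn S (Icc 0 b) := by
    intro b hb t ht
    exact ((hS t ht.1).continuousAt).continuousWithinAt
  -- Step 1: I nonneg
  have hInn : ∀ t, 0 ≤ t → 0 ≤ I t := by
    intro t ht
    obtain ⟨C, hC⟩ := isCompact_Icc.exists_bound_of_continuousOn (hScont t ht)
    have hC0 : 0 ≤ C := le_trans (norm_nonneg (S 0)) (hC 0 ⟨le_rfl, ht⟩)
    have key := nonpos_of_deriv_le_aux (f := fun s => -I s)
      (f' := fun s => (β (M s) * S s - (μ + ν)) * (-I s)) (a := 0) (b := t)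
      (K := c * C + (μ + ν)) ?_ (by simpa using hI0) ?_
    · simpa using key t ⟨ht, le_rfl⟩
    · intro s hs
      have := (hI s hs.1).neg
      exact this.congr_deriv (by ring)
    · intro s hs hfs
      have hs0 : 0 ≤ s := hs.1
      have hβM : 0 < β (M s) := hβpos _ (hM s hs0)
      have hβMle : β (M s) ≤ c := hβle _ (hM s hs0)
      have hSb : |S s| ≤ C := hC s ⟨hs.1, hs.2.le⟩
      have h1 : β (M s) * S s - (μ + ν) ≤ c * C + (μ + ν) := by
        have : β (M s) * S s ≤ c * C := by
          calc β (M s) * S s ≤ β (M s) * |S s| := by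
                exact mul_le_mul_of_nonneg_left (le_abs_self _) hβM.le
            _ ≤ c * C := mul_le_mul hβMle hSb (abs_nonneg _) hβ0.le
        linarith
      exact mul_le_mul_of_nonneg_right h1 hfs
  -- Step 2: S nonneg
  have hSnn : ∀ t, 0 ≤ t → 0 ≤ S t := by
    intro t ht
    have key := nonpos_of_deriv_le_aux (f := fun s => -S s)
      (f' := fun s => -(μ * (1 - S s) - β (M s) * I s * S s)) (a := 0) (b := t)
      (K := 0) (fun s hs => (hS s hs.1).neg) (by simpa using hS0) ?_
    · simpa using key t ⟨ht, le_rfl⟩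
    · intro s hs hfs
      have hs0 : 0 ≤ s := hs.1
      have hβM : 0 < β (M s) := hβpos _ (hM s hs0)
      have hIs : 0 ≤ I s := hInn s hs0
      have hfs' : 0 ≤ -S s := hfs
      have hSs : S s ≤ 0 := by linarith
      have hb1 : β (M s) * I s * S s ≤ 0 :=
        mul_nonpos_of_nonneg_of_nonpos (mul_nonneg hβM.le hIs) hSs
      show -(μ * (1 - S s) - β (M s) * I s * S s) ≤ 0 * -S s
      nlinarith
  -- Step 3: S + I ≤ 1
  have hSI : ∀ t, 0 ≤ t → S t + I t ≤ 1 := by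
    intro t ht
    have key := nonpos_of_deriv_le_aux (f := fun s => S s + I s - 1)
      (f' := fun s => μ * (1 - S s) - (μ + ν) * I s) (a := 0) (b := t)
      (K := 0) ?_ (by show S 0 + I 0 - 1 ≤ 0; linarith) ?_
    · have h' : S t + I t - 1 ≤ 0 := key t ⟨ht, le_rfl⟩
      linarith
    · intro s hs
      have := ((hS s hs.1).add (hI s hs.1)).sub_const 1
      exact this.congr_deriv (by ring)
    · intro s hs hfs
      have hIs : 0 ≤ I s := hInn s hs.1
      have hfs' : 0 ≤ S s + I s - 1 := hfs
      show μ * (1 - S s) - (μ + ν) * I s ≤ 0 * (S s + I s - 1)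
      nlinarith
  -- Step 4: comparison function u
  set u : ℝ → ℝ := fun t => I 0 / (1 + c * I 0 * t) with hudef
  have hDpos : ∀ t, 0 ≤ t → 0 < 1 + c * I 0 * t := by
    intro t ht
    have : 0 ≤ c * I 0 * t := mul_nonneg (mul_nonneg hβ0.le hI0) ht
    linarith
  have hunn : ∀ t, 0 ≤ t → 0 ≤ u t := fun t ht =>
    div_nonneg hI0 (hDpos t ht).le
  have hu' : ∀ t, 0 ≤ t → HasDerivAt u (-(c * (u t) ^ 2)) t := by
    intro t ht
    have hD : HasDerivAt (fun s => 1 + c * I 0 * s) (c * I 0) t := by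
      simpa using ((hasDerivAt_id t).const_mul (c * I 0)).const_add 1
    have := (hasDerivAt_const t (I 0)).div hD (ne_of_gt (hDpos t ht))
    refine this.congr_deriv ?_
    rw [hudef]
    field_simp
    ring
  have hIleu : ∀ t, 0 ≤ t → I t ≤ u t := by
    intro t ht
    have key := nonpos_of_deriv_le_aux (f := fun s => I s - u s)
      (f' := fun s => (β (M s) * I s * S s - (μ + ν) * I s) - (-(c * (u s) ^ 2)))
      (a := 0) (b := t) (K := 0) ?_ ?_ ?_
    · have h' : I t - u t ≤ 0 := key t ⟨ht, le_rfl⟩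
      linarith
    · exact fun s hs => (hI s hs.1).sub (hu' s hs.1)
    · simp [hudef]
    · intro s hs hfs
      have hs0 : 0 ≤ s := hs.1
      have hIs : 0 ≤ I s := hInn s hs0
      have hSs : 0 ≤ S s := hSnn s hs0
      have hSIs : S s ≤ 1 - I s := by linarith [hSI s hs0]
      have hus : 0 ≤ u s := hunn s hs0
      have hβM : 0 < β (M s) := hβpos _ (hM s hs0)
      have hβMle : β (M s) ≤ c := hβle _ (hM s hs0)
      have h1 : β (M s) * I s * S s ≤ c * (I s * (1 - I s)) := by
        calc β (M s) * I s * S s ≤ c * (I s * S s) := by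
              rw [mul_assoc]
              exact mul_le_mul_of_nonneg_right hβMle (mul_nonneg hIs hSs)
          _ ≤ c * (I s * (1 - I s)) := by
              apply mul_le_mul_of_nonneg_left _ hβ0.le
              exact mul_le_mul_of_nonneg_left hSIs hIs
      have h2 : c * I s ≤ (μ + ν) * I s := mul_le_mul_of_nonneg_right hc hIs
      have hfs' : 0 ≤ I s - u s := hfs
      have h3 : 0 ≤ c * ((I s - u s) * (I s + u s)) :=
        mul_nonneg hβ0.le (mul_nonneg hfs' (by linarith))
      show β (M s) * I s * S s - (μ + ν) * I s - -(c * u s ^ 2) ≤ 0 * (I s - u s)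
      nlinarith [h1, h2, h3]
  -- u → 0
  have hutend : Tendsto u atTop (𝓝 0) := by
    rcases eq_or_lt_of_le hI0 with h0 | h0
    · have : u = fun _ => 0 := by
        funext t; rw [hudef]; simp [← h0]
      rw [this]; exact tendsto_const_nhds
    · have hden : Tendsto (fun t : ℝ => 1 + c * I 0 * t) atTop atTop := by
        apply tendsto_atTop_add_const_left
        exact Tendsto.const_mul_atTop (by positivity) tendsto_id
      exact Tendsto.const_div_atTop hden _
  -- I → 0 by squeeze
  have hItend : Tendsto I atTop (𝓝 0) := by
    apply tendsto_of_tendsto_of_tendsto_of_le_of_le' tendsto_const_nhds hutend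
    · filter_upwards [eventually_ge_atTop (0:ℝ)] with t ht using hInn t ht
    · filter_upwards [eventually_ge_atTop (0:ℝ)] with t ht using hIleu t ht
  refine ⟨hItend, ?_⟩
  -- Step 5: S → 1
  have hftend : Tendsto (fun t => 1 - S t) atTop (𝓝 0) := by
    rw [tendsto_order]
    constructor
    · intro a ha
      filter_upwards [eventually_ge_atTop (0:ℝ)] with t ht
      have := hSI t ht
      have := hInn t ht
      linarith
    · intro ε hε
      set δ := μ * ε / (2 * c) with hδdef
      have hδpos : 0 < δ := by positivity
      obtain ⟨T₀, hT₀⟩ := eventually_atTop.1 (hItend.eventually_lt_const hδpos)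
      set T := max T₀ 0 with hTdef
      have hT0 : (0:ℝ) ≤ T := le_max_right _ _
      have hIδ : ∀ s, T ≤ s → I s < δ := fun s hs => hT₀ s (le_trans (le_max_left _ _) hs)
      -- key decay bound on [T, ∞)
      have hkey : ∀ t, T ≤ t → 1 - S t ≤ ε / 2 + Real.exp (-μ * (t - T)) := by
        intro t ht
        have key := nonpos_of_deriv_le_aux
          (f := fun s => (1 - S s) - ε / 2 - Real.exp (-μ * (s - T)))
          (f' := fun s => -(μ * (1 - S s) - β (M s) * I s * S s)
            - Real.exp (-μ * (s - T)) * (-μ))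
          (a := T) (b := t) (K := 0) ?_ ?_ ?_
        · linarith [key t ⟨ht, le_rfl⟩]
        · intro s hs
          have hs0 : 0 ≤ s := le_trans hT0 hs.1
          have hexp : HasDerivAt (fun s => Real.exp (-μ * (s - T)))
              (Real.exp (-μ * (s - T)) * (-μ)) s := by
            have h1 : HasDerivAt (fun s : ℝ => -μ * (s - T)) (-μ) s := by
              simpa using ((hasDerivAt_id s).sub_const T).const_mul (-μ)
            exact h1.exp
          have := (((hasDerivAt_const s (1:ℝ)).sub (hS s hs0)).sub_const (ε/2)).sub hexp
          exact this.congr_deriv (by ring)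
        · have hST : S T + I T ≤ 1 := hSI T hT0
          have hIT : 0 ≤ I T := hInn T hT0
          have hexpT : Real.exp (-μ * (T - T)) = 1 := by simp
          show 1 - S T - ε / 2 - Real.exp (-μ * (T - T)) ≤ 0
          rw [hexpT]
          have hST1 : S T ≥ 0 := hSnn T hT0
          linarith
        · intro s hs hfs
          have hsT : T ≤ s := hs.1
          have hs0 : 0 ≤ s := le_trans hT0 hsT
          have hIs : 0 ≤ I s := hInn s hs0
          have hSs : 0 ≤ S s := hSnn s hs0
          have hSs1 : S s ≤ 1 := by linarith [hSI s hs0]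
          have hβM : 0 < β (M s) := hβpos _ (hM s hs0)
          have hβMle : β (M s) ≤ c := hβle _ (hM s hs0)
          have hIsδ : I s < δ := hIδ s hsT
          have h1 : β (M s) * I s * S s ≤ c * δ := by
            calc β (M s) * I s * S s ≤ β (M s) * I s * 1 :=
                  mul_le_mul_of_nonneg_left hSs1 (mul_nonneg hβM.le hIs)
              _ = β (M s) * I s := mul_one _
              _ ≤ c * δ := mul_le_mul hβMle hIsδ.le hIs hβ0.le
          have h2 : c * δ = μ * ε / 2 := by
            rw [hδdef]; field_simp
          have hE : 0 ≤ Real.exp (-μ * (s - T)) := (Real.exp_pos _).le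
          have hfs' : 0 ≤ 1 - S s - ε / 2 - Real.exp (-μ * (s - T)) := hfs
          show -(μ * (1 - S s) - β (M s) * I s * S s)
              - Real.exp (-μ * (s - T)) * (-μ)
              ≤ 0 * (1 - S s - ε / 2 - Real.exp (-μ * (s - T)))
          nlinarith [h1, h2, hE, mul_nonneg hμ.le hfs']
      -- conclude: eventually 1 - S t < ε
      have hexp0 : Tendsto (fun t => Real.exp (-μ * (t - T))) atTop (𝓝 0) := by
        apply Real.tendsto_exp_atBot.comp
        have h1 : Tendsto (fun t : ℝ => μ * (t - T)) atTop atTop := by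
          apply Tendsto.const_mul_atTop hμ
          exact tendsto_atTop_add_const_right _ (-T) tendsto_id
        have := tendsto_neg_atTop_atBot.comp h1
        simpa [Function.comp_def, neg_mul] using this
      filter_upwards [eventually_ge_atTop T, hexp0.eventually_lt_const (half_pos hε)]
        with t ht hexp
      have := hkey t ht
      linarith
  have : Tendsto (fun t => 1 - (1 - S t)) atTop (𝓝 (1 - 0)) :=
    tendsto_const_nhds.sub hftend
  simpa using this
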